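/- Let n ≥ 0 be an integer and let F be a finite set generating at level n. Then 3^(#F) ≥ 2n + 1; equivalently, #F ≥ ⌈log(2n+1)/log 3⌉, where ⌈·⌉ is the ceiling function and log is the natural logarithm. -/

import Mathlib

/-- A finite set `F ⊆ ℤ ∩ [-n, n]` *generates at level* `n` if every integer `x`
with `|x| ≤ n` can be written as `x = ∑_{j∈F} α(j)·j` for coefficients
`α(j) ∈ {-1,0,1}` whose total mass `∑ |α(j)·j|` is at most `n`. -/
def GeneratesAtLevel (n : ℤ) (F : Finset ℤ) : Prop :=
  (∀ j ∈ F, -n ≤ j ∧ j ≤ n) ∧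
  ∀ x : ℤ, |x| ≤ n →
    ∃ α : ℤ → ℤ, (∀ j ∈ F, α j = -1 ∨ α j = 0 ∨ α j = 1) ∧
      x = ∑ j ∈ F, α j * j ∧ (∑ j ∈ F, |α j * j|) ≤ n

/-- if `F` generates at level `n ≥ 0` then `3^#F ≥ 2n+1`,
equivalently `#F ≥ ⌈log(2n+1)/log 3⌉`. -/
theorem stmt3 (n : ℤ) (hn : 0 ≤ n) (F : Finset ℤ) (hF : GeneratesAtLevel n F) :
    2 * n + 1 ≤ 3 ^ F.card ∧
    ⌈Real.log (2 * (n : ℝ) + 1) / Real.log 3⌉ ≤ (F.card : ℤ) := by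
  classical
  obtain ⟨hrange, hgen⟩ := hF
  set g : ℤ → (ℤ → ℤ) := fun x =>
    if h : |x| ≤ n then Classical.choose (hgen x h) else 0 with hg
  have gspec : ∀ x (h : |x| ≤ n),
      (∀ j ∈ F, g x j = -1 ∨ g x j = 0 ∨ g x j = 1) ∧
      x = ∑ j ∈ F, g x j * j ∧ (∑ j ∈ F, |g x j * j|) ≤ n := by
    intro x h
    have : g x = Classical.choose (hgen x h) := by simp [hg, h]
    rw [this]
    exact Classical.choose_spec (hgen x h)
  have key : 2 * n + 1 ≤ (3 : ℤ) ^ F.card := by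
    set s : Finset ℤ := Finset.Icc (-n) n with hs
    set t := F.pi (fun _ => Finset.Icc (-1 : ℤ) 1) with ht
    have hcard : s.card ≤ t.card := by
      apply Finset.card_le_card_of_injOn (fun x => (fun j _ => g x j : ∀ j ∈ F, ℤ))
      · intro x hx
        have habs : |x| ≤ n := abs_le.mpr (Finset.mem_Icc.mp hx)
        simp only [ht, Finset.mem_coe, Finset.mem_pi]
        intro j hj
        rcases (gspec x habs).1 j hj with h | h | h <;> simp [h]
      · intro x hx y hy hxy
        have hax : |x| ≤ n := abs_le.mpr (Finset.mem_Icc.mp hx)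
        have hay : |y| ≤ n := abs_le.mpr (Finset.mem_Icc.mp hy)
        have hagree : ∀ j ∈ F, g x j = g y j := by
          intro j hj
          exact congrFun (congrFun hxy j) hj
        rw [(gspec x hax).2.1, (gspec y hay).2.1]
        exact Finset.sum_congr rfl (fun j hj => by rw [hagree j hj])
    have hscard : s.card = (2 * n + 1).toNat := by
      rw [hs, Int.card_Icc]
      congr 1
      ring
    have htcard : t.card = 3 ^ F.card := by
      rw [ht, Finset.card_pi]
      simp [Int.card_Icc]
    rw [hscard, htcard] at hcard
    calc 2 * n + 1 = ((2 * n + 1).toNat : ℤ) := by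
          rw [Int.toNat_of_nonneg (by linarith)]
      _ ≤ ((3 ^ F.card : ℕ) : ℤ) := by exact_mod_cast hcard
      _ = (3 : ℤ) ^ F.card := by push_cast; ring
  refine ⟨key, ?_⟩
  rw [Int.ceil_le]
  have hlog3 : (0 : ℝ) < Real.log 3 := Real.log_pos (by norm_num)
  rw [div_le_iff₀ hlog3]
  have hpos : (0 : ℝ) < 2 * (n : ℝ) + 1 := by
    have : (0 : ℝ) ≤ (n : ℝ) := by exact_mod_cast hn
    linarith
  have hle : (2 * (n : ℝ) + 1) ≤ (3 : ℝ) ^ F.card := by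
    have := key
    exact_mod_cast this
  calc Real.log (2 * (n : ℝ) + 1) ≤ Real.log ((3 : ℝ) ^ F.card) :=
        Real.log_le_log hpos hle
    _ = F.card * Real.log 3 := by rw [Real.log_pow]
    _ = (F.card : ℤ) * Real.log 3 := by push_cast; ring
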